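/- Let E(z,s) = Σ_{γ ∈ Γ_∞\PSL₂(ℤ)} Im(γz)^s be the real-analytic Eisenstein series for PSL₂(ℤ) (convergent for Re(s) > 1, meromorphically continued), and for a prime p define E(z,s)_{Γ₀(p)} as the corresponding Eisenstein series for the cusp at infinity of Γ₀(p). Then for Re(s) > 1, E(z,s)_{Γ₀(p)} = (1 - p^{-2s})^{-1} (p^{-s} E(pz, s) - p^{-2s} E(z,s)). -/

import Mathlib

open Real Complex

/-- One term `(Im z / |cz+d|²)^s` of the real-analytic Eisenstein series. -/
noncomputable def eisTerm (z : ℂ) (s : ℂ) (cd : ℤ × ℤ) : ℂ :=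
  ((z.im / Complex.normSq ((cd.1 : ℂ) * z + (cd.2 : ℂ)) : ℝ) : ℂ) ^ s

/-- The real-analytic Eisenstein series `E(z,s) = Σ_{γ ∈ Γ_∞\PSL₂(ℤ)} Im(γz)^s` for `PSL₂(ℤ)`:
cosets in `Γ_∞\PSL₂(ℤ)` correspond to coprime bottom rows `±(c,d)`, whence the factor `1/2`
when summing over all coprime pairs. -/
noncomputable def eisFull (z : ℂ) (s : ℂ) : ℂ :=
  (1 / 2) * ∑' cd : {cd : ℤ × ℤ // IsCoprime cd.1 cd.2}, eisTerm z s cd.1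

/-- The Eisenstein series at the cusp `∞` for `Γ₀(p)`: bottom rows of `Γ₀(p)` are the
coprime pairs `(c,d)` with `p ∣ c`. -/
noncomputable def eisGamma0 (p : ℕ) (z : ℂ) (s : ℂ) : ℂ :=
  (1 / 2) * ∑' cd : {cd : ℤ × ℤ // IsCoprime cd.1 cd.2 ∧ (p : ℤ) ∣ cd.1}, eisTerm z s cd.1

section Aux
open Set

-- helper: inverse cpow of nonneg real
lemma ofReal_inv_cpow (x : ℝ) (hx : 0 ≤ x) (s : ℂ) :
    ((x⁻¹ : ℝ) : ℂ) ^ s = ((x : ℝ) : ℂ) ^ (-s) := by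
  rw [Complex.ofReal_inv, Complex.inv_cpow _ _ (by
    rw [Complex.arg_ofReal_of_nonneg hx]; exact Real.pi_ne_zero.symm ), Complex.cpow_neg]

lemma coprime_mul_left_iff {p : ℕ} (hp : p.Prime) (c d : ℤ) :
    IsCoprime ((p:ℤ) * c) d ↔ IsCoprime c d ∧ ¬ (p:ℤ) ∣ d := by
  have hpZ : Prime (p : ℤ) := Nat.prime_iff_prime_int.mp hp
  constructor
  · intro h
    exact ⟨h.of_mul_left_right, fun hdvd => hpZ.not_unit
      (h.of_mul_left_left.isUnit_of_dvd' dvd_rfl hdvd)⟩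
  · rintro ⟨h1, h2⟩
    exact (hpZ.coprime_iff_not_dvd.mpr h2).mul_left h1

lemma summable_norm_eisTerm (z : ℂ) (hz : 0 < z.im) {s : ℂ} (hs : 1 < s.re) :
    Summable fun cd : ℤ × ℤ => ‖eisTerm z s cd‖ := by
  set σ := s.re with hσ
  have h2σ : (2:ℝ) < 2 * σ := by linarith
  have hmaj : Summable fun cd : ℤ × ℤ => ‖(![cd.1, cd.2] : Fin 2 → ℤ)‖ ^ (-(2*σ)) := by
    have h := (EisensteinSeries.summable_one_div_norm_rpow h2σ).comp_injective
      (finTwoArrowEquiv ℤ).symm.injective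
    exact h
  refine Summable.of_nonneg_of_le (fun _ => norm_nonneg _) ?_
    (hmaj.mul_left ((z.im ^ σ) * (EisensteinSeries.r ⟨z, hz⟩) ^ (-(2*σ))))
  intro cd
  by_cases hcd : cd = (0, 0)
  · subst hcd
    have hs0 : s ≠ 0 := fun h => by rw [hσ, h] at hs; norm_num at hs
    have : eisTerm z s (0,0) = 0 := by
      simp [eisTerm, Complex.zero_cpow hs0]
    rw [this, norm_zero]
    exact mul_nonneg (mul_nonneg (Real.rpow_nonneg hz.le _)
      (Real.rpow_nonneg (EisensteinSeries.r_pos _).le _)) (Real.rpow_nonneg (norm_nonneg _) _)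
  · have hne : (cd.1 : ℂ) * z + (cd.2 : ℂ) ≠ 0 := by
      intro h
      have him : (cd.1 : ℝ) * z.im = 0 := by
        have := congrArg Complex.im h
        simpa using this
      have hc1 : cd.1 = 0 := by
        rcases mul_eq_zero.mp him with h' | h'
        · exact_mod_cast h'
        · exact absurd h' hz.ne'
      have hc2 : cd.2 = 0 := by
        rw [hc1] at h
        simpa using h
      exact hcd (Prod.ext hc1 hc2)
    set w : ℂ := (cd.1 : ℂ) * z + (cd.2 : ℂ) with hw
    have hN : 0 < Complex.normSq w := Complex.normSq_pos.mpr hne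
    have hb : 0 < z.im / Complex.normSq w := div_pos hz hN
    rw [eisTerm, Complex.norm_cpow_eq_rpow_re_of_pos hb]
    have h1 : (z.im / Complex.normSq w) ^ σ
        = z.im ^ σ * ‖w‖ ^ (-(2*σ)) := by
      rw [Real.div_rpow hz.le (Complex.normSq_nonneg w), div_eq_mul_inv,
        ← Real.rpow_neg (Complex.normSq_nonneg w), ← Complex.sq_norm,
        ← Real.rpow_natCast ‖w‖ 2, ← Real.rpow_mul (norm_nonneg w)]
      norm_num
    rw [h1, mul_assoc]
    refine mul_le_mul_of_nonneg_left ?_ (Real.rpow_nonneg hz.le σ)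
    have hx0 : (![cd.1, cd.2] : Fin 2 → ℤ) ≠ 0 := by
      intro h
      apply hcd
      have h0 := congrFun h 0
      have h1' := congrFun h 1
      simp at h0 h1'
      exact Prod.ext h0 h1'
    have := EisensteinSeries.summand_bound ⟨z, hz⟩ (k := 2*σ) (by positivity) ![cd.1, cd.2]
    simpa [hw] using this

lemma eisTerm_pmul (p : ℕ) (z : ℂ) (hz : 0 ≤ z.im) (s : ℂ) (cd : ℤ × ℤ) :
    eisTerm ((p : ℂ) * z) s cd = (p : ℂ) ^ s * eisTerm z s ((p : ℤ) * cd.1, cd.2) := by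
  have him : ((p : ℂ) * z).im = (p : ℝ) * z.im := by simp [Complex.mul_im]
  have harg : (cd.1 : ℂ) * ((p : ℂ) * z) + (cd.2 : ℂ)
      = (((p : ℤ) * cd.1 : ℤ) : ℂ) * z + (cd.2 : ℂ) := by push_cast; ring
  have hbase : (((p : ℂ) * z).im / Complex.normSq ((cd.1 : ℂ) * ((p : ℂ) * z) + (cd.2 : ℂ)) : ℝ)
      = (p : ℝ) * (z.im / Complex.normSq ((((p : ℤ) * cd.1 : ℤ) : ℂ) * z + (cd.2 : ℂ))) := by
    rw [him, harg, mul_div_assoc]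
  rw [eisTerm, hbase, Complex.ofReal_mul,
    Complex.mul_cpow_ofReal_nonneg (by positivity) (div_nonneg hz (Complex.normSq_nonneg _))]
  norm_num [eisTerm]

lemma eisTerm_mul_mul (p : ℕ) (hp : 0 < p) (z : ℂ) (hz : 0 ≤ z.im) (s : ℂ) (cd : ℤ × ℤ) :
    eisTerm z s ((p : ℤ) * cd.1, (p : ℤ) * cd.2) = (p : ℂ) ^ (-2 * s) * eisTerm z s cd := by
  have hnormSq : Complex.normSq ((((p : ℤ) * cd.1 : ℤ) : ℂ) * z + (((p : ℤ) * cd.2 : ℤ) : ℂ))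
      = (p : ℝ) ^ 2 * Complex.normSq ((cd.1 : ℂ) * z + (cd.2 : ℂ)) := by
    have : (((p : ℤ) * cd.1 : ℤ) : ℂ) * z + (((p : ℤ) * cd.2 : ℤ) : ℂ)
        = (p : ℂ) * ((cd.1 : ℂ) * z + (cd.2 : ℂ)) := by push_cast; ring
    rw [this, Complex.normSq_mul, Complex.normSq_natCast]
    ring
  set N := Complex.normSq ((cd.1 : ℂ) * z + (cd.2 : ℂ)) with hN
  have hbase : (z.im / ((p : ℝ) ^ 2 * N) : ℝ) = (p : ℝ)⁻¹ * ((p : ℝ)⁻¹ * (z.im / N)) := by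
    rw [div_eq_mul_inv, mul_inv, sq, mul_inv, div_eq_mul_inv]; ring
  have hp0 : (0 : ℝ) ≤ (p : ℝ)⁻¹ := by positivity
  have hpc : ((p : ℂ)) ≠ 0 := by exact_mod_cast hp.ne'
  rw [eisTerm, hnormSq, hbase, Complex.ofReal_mul,
    Complex.mul_cpow_ofReal_nonneg hp0 (mul_nonneg hp0 (div_nonneg hz (Complex.normSq_nonneg _))),
    Complex.ofReal_mul,
    Complex.mul_cpow_ofReal_nonneg hp0 (div_nonneg hz (Complex.normSq_nonneg _)),
    ofReal_inv_cpow (p : ℝ) (by positivity)]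
  rw [eisTerm, ← mul_assoc, Complex.ofReal_natCast, ← Complex.cpow_add _ _ hpc,
    show -s + -s = -2 * s from by ring]

end Aux

/-- For a prime `p`, `z` in the upper half plane and `Re s > 1`:
`E(z,s)_{Γ₀(p)} = (1 - p^{-2s})⁻¹ (p^{-s} E(pz,s) - p^{-2s} E(z,s))`. -/
theorem eisGamma0_eq (p : ℕ) (hp : p.Prime) (z : ℂ) (hz : 0 < z.im) (s : ℂ) (hs : 1 < s.re) :
    eisGamma0 p z s
      = (1 - (p : ℂ) ^ (-2 * s))⁻¹
        * ((p : ℂ) ^ (-s) * eisFull ((p : ℂ) * z) s - (p : ℂ) ^ (-2 * s) * eisFull z s) := by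
  have hppos : 0 < p := hp.pos
  have hpZ : ((p : ℤ)) ≠ 0 := by exact_mod_cast hppos.ne'
  have hpc : ((p : ℂ)) ≠ 0 := by exact_mod_cast hppos.ne'
  set f : ℤ × ℤ → ℂ := eisTerm z s with hf
  set g : ℤ × ℤ → ℂ := eisTerm ((p : ℂ) * z) s with hg
  set h : ℤ × ℤ → ℂ := fun cd => f ((p : ℤ) * cd.1, cd.2) with hh
  set T : ℤ × ℤ → ℤ × ℤ := fun cd => ((p : ℤ) * cd.1, cd.2) with hT
  set V : ℤ × ℤ → ℤ × ℤ := fun cd => (cd.1, (p : ℤ) * cd.2) with hV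
  have hTinj : Function.Injective T := by
    intro a b hab
    rw [hT] at hab
    simp only [Prod.mk.injEq] at hab
    exact Prod.ext (mul_left_cancel₀ hpZ hab.1) hab.2
  have hVinj : Function.Injective V := by
    intro a b hab
    rw [hV] at hab
    simp only [Prod.mk.injEq] at hab
    exact Prod.ext hab.1 (mul_left_cancel₀ hpZ hab.2)
  set Cop : Set (ℤ × ℤ) := {cd | IsCoprime cd.1 cd.2} with hCop
  set A' : Set (ℤ × ℤ) := {cd | IsCoprime cd.1 cd.2 ∧ (p : ℤ) ∣ cd.1} with hA'
  set Cop' : Set (ℤ × ℤ) := {cd | IsCoprime cd.1 cd.2 ∧ ¬ (p : ℤ) ∣ cd.1} with hCop'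
  set CopD : Set (ℤ × ℤ) := {cd | IsCoprime cd.1 cd.2 ∧ (p : ℤ) ∣ cd.2} with hCopD
  set CopnD : Set (ℤ × ℤ) := {cd | IsCoprime cd.1 cd.2 ∧ ¬ (p : ℤ) ∣ cd.2} with hCopnD
  have hfsum : Summable f := (summable_norm_eisTerm z hz hs).of_norm
  have hhsum : Summable h := hfsum.comp_injective hTinj
  set G : ℂ := ∑' cd, A'.indicator f cd with hGdef
  set C' : ℂ := ∑' cd, Cop'.indicator f cd with hC'def
  -- identification of the defs with indicator sums
  have hG0 : eisGamma0 p z s = (1 / 2) * G := by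
    rw [eisGamma0, hGdef, ← tsum_subtype A' f]
    rfl
  have hE : eisFull z s = (1 / 2) * ∑' cd, Cop.indicator f cd := by
    rw [eisFull, ← tsum_subtype Cop f]
    rfl
  have hEp : eisFull ((p : ℂ) * z) s = (1 / 2) * ∑' cd, Cop.indicator g cd := by
    rw [eisFull, ← tsum_subtype Cop g]
    rfl
  -- split Cop by divisibility of the first coordinate
  have hsplit1 : ∑' cd, Cop.indicator f cd = C' + G := by
    have hunion : Cop = Cop' ∪ A' := by
      ext cd
      by_cases hd : (p : ℤ) ∣ cd.1 <;> simp [hCop, hCop', hA', hd]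
    have hdis : Disjoint Cop' A' := by
      rw [Set.disjoint_left]
      rintro cd ⟨_, h2⟩ ⟨_, h4⟩
      exact h2 h4
    rw [hunion, Set.indicator_union_of_disjoint hdis,
      Summable.tsum_add (hfsum.indicator _) (hfsum.indicator _)]
  -- the p^{-s} E(pz,s) side
  have e1 : ∑' cd, Cop.indicator g cd = (p : ℂ) ^ s * ∑' cd, Cop.indicator h cd := by
    rw [← tsum_mul_left]
    refine tsum_congr fun cd => ?_
    by_cases hcd : cd ∈ Cop
    · rw [Set.indicator_of_mem hcd, Set.indicator_of_mem hcd, hg, hh, hf,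
        eisTerm_pmul p z hz.le s cd]
    · rw [Set.indicator_of_notMem hcd, Set.indicator_of_notMem hcd, mul_zero]
  -- split the h-sum by divisibility of the second coordinate
  have hsplit2 : ∑' cd, Cop.indicator h cd
      = ∑' cd, CopnD.indicator h cd + ∑' cd, CopD.indicator h cd := by
    have hunion : Cop = CopnD ∪ CopD := by
      ext cd
      by_cases hd : (p : ℤ) ∣ cd.2 <;> simp [hCop, hCopnD, hCopD, hd]
    have hdis : Disjoint CopnD CopD := by
      rw [Set.disjoint_left]
      rintro cd ⟨_, h2⟩ ⟨_, h4⟩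
      exact h2 h4
    rw [hunion, Set.indicator_union_of_disjoint hdis,
      Summable.tsum_add (hhsum.indicator _) (hhsum.indicator _)]
  -- first piece: reindex by T to get G
  have eqA : ∑' cd, CopnD.indicator h cd = G := by
    have key : ∀ cd : ℤ × ℤ, CopnD.indicator h cd = A'.indicator f (T cd) := by
      intro cd
      by_cases hcd : cd ∈ CopnD
      · have hmem : T cd ∈ A' :=
          ⟨(coprime_mul_left_iff hp cd.1 cd.2).mpr ⟨hcd.1, hcd.2⟩, Dvd.intro _ rfl⟩
        rw [Set.indicator_of_mem hcd, Set.indicator_of_mem hmem]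
      · have hmem : T cd ∉ A' := by
          rintro ⟨h1, _⟩
          exact hcd ⟨((coprime_mul_left_iff hp cd.1 cd.2).mp h1).1,
            ((coprime_mul_left_iff hp cd.1 cd.2).mp h1).2⟩
        rw [Set.indicator_of_notMem hcd, Set.indicator_of_notMem hmem]
    rw [tsum_congr key, hGdef]
    refine hTinj.tsum_eq ?_
    intro x hx
    have hxA : x ∈ A' := Set.mem_of_indicator_ne_zero hx
    obtain ⟨c, hc⟩ := hxA.2
    exact ⟨(c, x.2), Prod.ext hc.symm rfl⟩
  -- second piece: reindex by V and use eisTerm_mul_mul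
  have eqB : ∑' cd, CopD.indicator h cd = (p : ℂ) ^ (-2 * s) * C' := by
    have key : ∀ cd : ℤ × ℤ,
        CopD.indicator h (V cd) = Cop'.indicator (fun cd => (p : ℂ) ^ (-2 * s) * f cd) cd := by
      intro cd
      have hiff : V cd ∈ CopD ↔ cd ∈ Cop' := by
        constructor
        · rintro ⟨h1, _⟩
          have h1' := (coprime_mul_left_iff hp cd.2 cd.1).mp h1.symm
          exact ⟨h1'.1.symm, h1'.2⟩
        · rintro ⟨h1, h2⟩
          exact ⟨((coprime_mul_left_iff hp cd.2 cd.1).mpr ⟨h1.symm, h2⟩).symm,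
            Dvd.intro _ rfl⟩
      by_cases hcd : cd ∈ Cop'
      · rw [Set.indicator_of_mem (hiff.mpr hcd), Set.indicator_of_mem hcd, hh, hf]
        exact eisTerm_mul_mul p hppos z hz.le s cd
      · rw [Set.indicator_of_notMem (fun hm => hcd (hiff.mp hm)),
          Set.indicator_of_notMem hcd]
    calc ∑' cd, CopD.indicator h cd
        = ∑' cd, CopD.indicator h (V cd) := by
          refine (hVinj.tsum_eq ?_).symm
          intro x hx
          have hxD : x ∈ CopD := Set.mem_of_indicator_ne_zero hx
          obtain ⟨c, hc⟩ := hxD.2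
          exact ⟨(x.1, c), Prod.ext rfl hc.symm⟩
      _ = ∑' cd, Cop'.indicator (fun cd => (p : ℂ) ^ (-2 * s) * f cd) cd := tsum_congr key
      _ = (p : ℂ) ^ (-2 * s) * C' := by
          rw [← tsum_mul_left]
          refine tsum_congr fun cd => ?_
          by_cases hcd : cd ∈ Cop'
          · rw [Set.indicator_of_mem hcd, Set.indicator_of_mem hcd]
          · rw [Set.indicator_of_notMem hcd, Set.indicator_of_notMem hcd, mul_zero]
  -- nonvanishing of 1 - p^{-2s}
  have hne : (1 : ℂ) - (p : ℂ) ^ (-2 * s) ≠ 0 := by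
    intro h0
    have h1 : (p : ℂ) ^ (-2 * s) = 1 := by linear_combination -h0
    have h2 : ‖(p : ℂ) ^ (-2 * s)‖ = (p : ℝ) ^ ((-2 * s).re) := by
      rw [show ((p : ℂ)) = (((p : ℝ) : ℂ)) from by push_cast; rfl]
      exact Complex.norm_cpow_eq_rpow_re_of_pos (by exact_mod_cast hppos) _
    rw [h1] at h2
    have hlt : (p : ℝ) ^ ((-2 * s).re) < 1 := by
      refine Real.rpow_lt_one_of_one_lt_of_neg (by exact_mod_cast hp.one_lt) ?_
      have : (-2 * s).re = -(2 * s.re) := by simp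
      rw [this]; linarith
    rw [norm_one] at h2
    linarith [h2 ▸ hlt]
  have hps : (p : ℂ) ^ (-s) * (p : ℂ) ^ s = 1 := by
    rw [← Complex.cpow_add _ _ hpc]; simp
  -- assemble
  have h1 : eisFull ((p : ℂ) * z) s = (1 / 2) * ((p : ℂ) ^ s * (G + (p : ℂ) ^ (-2 * s) * C')) := by
    rw [hEp, e1, hsplit2, eqA, eqB]
  have h2 : eisFull z s = (1 / 2) * (C' + G) := by rw [hE, hsplit1]
  rw [hG0, h2, h1, eq_comm, inv_mul_eq_iff_eq_mul₀ hne]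
  linear_combination ((1 / 2 : ℂ) * (G + (p : ℂ) ^ (-2 * s) * C')) * hps
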